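/- With the maps of the context, for every p ∈ ℝ, every λ ∈ ℂ and every integer y₀ ≠ 0: A_p(e₁δ_{y₀} − e₄δ_{−y₀}) = e^{2ip}·(e₁δ_{y₀} − e₄δ_{−y₀}) and A_p(e₂δ_{y₀} − e₅δ_{−y₀}) = e^{−2ip}·(e₂δ_{y₀} − e₅δ_{−y₀}). (These are the eigenvectors spanning the subspaces H_a and H_b on which the interacting two-particle evolution acts as the pure phases e^{±2ip}.) -/

import Mathlib

noncomputable section
open Matrix
open scoped Classical

/-- The 6×6 block-diagonal matrix `M = diag(O′, O′)`, where `O′` is the 3×3 matrix with rows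
`(0, 0, −conj λ)`, `(0, 0, −conj λ)`, `(−λ, −λ, 0)`. -/
def Mblk (l : ℂ) : Matrix (Fin 6) (Fin 6) ℂ :=
  !![0, 0, -(starRingEnd ℂ) l, 0, 0, 0;
     0, 0, -(starRingEnd ℂ) l, 0, 0, 0;
     -l, -l, 0, 0, 0, 0;
     0, 0, 0, 0, 0, -(starRingEnd ℂ) l;
     0, 0, 0, 0, 0, -(starRingEnd ℂ) l;
     0, 0, 0, -l, -l, 0]

/-- The one-step interaction unitary `E = exp(−i·M)`. -/
def Emat (l : ℂ) : Matrix (Fin 6) (Fin 6) ℂ := NormedSpace.exp ((-Complex.I) • Mblk l)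

/-- The swap `S`: `(S x)(y) = (x(−y)₄, x(−y)₅, x(−y)₆, x(−y)₁, x(−y)₂, x(−y)₃)`. -/
def Sop (x : ℤ → Fin 6 → ℂ) : ℤ → Fin 6 → ℂ := fun y i => x (-y) (![3, 4, 5, 0, 1, 2] i)

/-- The antisymmetrizer `P₋ = (1/2)(id − S)`. -/
def Pneg (x : ℤ → Fin 6 → ℂ) : ℤ → Fin 6 → ℂ := fun y i => (1 / 2) * (x y i - Sop x y i)

/-- The free evolution `D_p` at total momentum `p`:
`(D_p x)(y) = (e^{2ip} x(y)₁, e^{−2ip} x(y)₂, x(y+2)₃, e^{2ip} x(y)₄, e^{−2ip} x(y)₅, x(y−2)₆)`. -/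
def Dop (p : ℝ) (x : ℤ → Fin 6 → ℂ) : ℤ → Fin 6 → ℂ := fun y =>
  ![Complex.exp (2 * p * Complex.I) * x y 0,
    Complex.exp (-(2 * p) * Complex.I) * x y 1,
    x (y + 2) 2,
    Complex.exp (2 * p * Complex.I) * x y 3,
    Complex.exp (-(2 * p) * Complex.I) * x y 4,
    x (y - 2) 5]

/-- The interaction `J`: `(J x)(0) = E · x(0)` and `(J x)(y) = x(y)` for `y ≠ 0`. -/
def Jop (l : ℂ) (x : ℤ → Fin 6 → ℂ) : ℤ → Fin 6 → ℂ := fun y =>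
  if y = 0 then (Emat l).mulVec (x 0) else x y

/-- The one-step two-particle evolution `A_p = P₋ ∘ J ∘ D_p ∘ P₋`. -/
def Aop (l : ℂ) (p : ℝ) : (ℤ → Fin 6 → ℂ) → (ℤ → Fin 6 → ℂ) :=
  Pneg ∘ Jop l ∘ Dop p ∘ Pneg


private lemma vec6_0 {α : Type*} (a b c d e f : α) : ![a,b,c,d,e,f] 0 = a := rfl
private lemma vec6_1 {α : Type*} (a b c d e f : α) : ![a,b,c,d,e,f] 1 = b := rfl
private lemma vec6_2 {α : Type*} (a b c d e f : α) : ![a,b,c,d,e,f] 2 = c := rfl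
private lemma vec6_3 {α : Type*} (a b c d e f : α) : ![a,b,c,d,e,f] 3 = d := rfl
private lemma vec6_4 {α : Type*} (a b c d e f : α) : ![a,b,c,d,e,f] 4 = e := rfl
private lemma vec6_5 {α : Type*} (a b c d e f : α) : ![a,b,c,d,e,f] 5 = f := rfl

/-- The vectors `e₁δ_{y₀} − e₄δ_{−y₀}` and `e₂δ_{y₀} − e₅δ_{−y₀}` (for `y₀ ≠ 0`) are
eigenvectors of the interacting two-particle evolution `A_p` with eigenvalues `e^{2ip}` and
`e^{−2ip}` respectively; they span the subspaces `H_a` and `H_b` on which `A_p` acts as a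
pure phase. -/
theorem Aop_phase_eigenvectors (l : ℂ) (p : ℝ) (y₀ : ℤ) (hy : y₀ ≠ 0) :
    let v₁ : ℤ → Fin 6 → ℂ := fun y i =>
      (if y = y₀ ∧ i = 0 then 1 else 0) - (if y = -y₀ ∧ i = 3 then 1 else 0)
    let v₂ : ℤ → Fin 6 → ℂ := fun y i =>
      (if y = y₀ ∧ i = 1 then 1 else 0) - (if y = -y₀ ∧ i = 4 then 1 else 0)
    Aop l p v₁ = (fun y i => Complex.exp (2 * p * Complex.I) * v₁ y i) ∧
    Aop l p v₂ = (fun y i => Complex.exp (-(2 * p) * Complex.I) * v₂ y i) := by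
  intro v₁ v₂
  have hy' : (0:ℤ) ≠ y₀ := fun h => hy h.symm
  have hy'' : (0:ℤ) ≠ -y₀ := by omega
  have h3 : (-y₀ : ℤ) ≠ y₀ := by omega
  have h4 : (y₀ : ℤ) ≠ -y₀ := by omega
  -- scalar commutes with Pneg
  have hPsmul : ∀ (c : ℂ) (x : ℤ → Fin 6 → ℂ),
      Pneg (fun y i => c * x y i) = fun y i => c * Pneg x y i := by
    intro c x
    funext y i
    simp only [Pneg, Sop]
    ring
  constructor
  · have hP : Pneg v₁ = v₁ := by
      funext y i
      simp only [Pneg, Sop, v₁]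
      by_cases h1 : y = y₀
      · subst h1
        fin_cases i <;> simp [vec6_0, vec6_1, vec6_2, vec6_3, vec6_4, vec6_5, h3, h4, hy] <;> norm_num
      · by_cases h2 : y = -y₀
        · subst h2
          fin_cases i <;> simp [vec6_0, vec6_1, vec6_2, vec6_3, vec6_4, vec6_5, h3, h4, hy] <;> norm_num
        · have h5 : -y ≠ y₀ := by omega
          have h6 : -y ≠ -y₀ := by omega
          fin_cases i <;> simp [vec6_0, vec6_1, vec6_2, vec6_3, vec6_4, vec6_5, h1, h2, h5, h6]
    have hD : Dop p v₁ = fun y i => Complex.exp (2 * p * Complex.I) * v₁ y i := by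
      funext y i
      fin_cases i <;> simp [vec6_0, vec6_1, vec6_2, vec6_3, vec6_4, vec6_5, Dop, v₁, h3, h4]
    have hv0 : (fun i => Complex.exp (2 * p * Complex.I) * v₁ 0 i) = (0 : Fin 6 → ℂ) := by
      funext i
      simp [v₁, hy', hy'']
    have hJ : Jop l (fun y i => Complex.exp (2 * p * Complex.I) * v₁ y i)
        = fun y i => Complex.exp (2 * p * Complex.I) * v₁ y i := by
      funext y i
      simp only [Jop]
      split
      · next h => subst h; rw [hv0, Matrix.mulVec_zero]; simp [v₁, hy', hy'']
      · rfl
    show Pneg (Jop l (Dop p (Pneg v₁))) = _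
    rw [hP, hD, hJ, hPsmul, hP]
  · have hP : Pneg v₂ = v₂ := by
      funext y i
      simp only [Pneg, Sop, v₂]
      by_cases h1 : y = y₀
      · subst h1
        fin_cases i <;> simp [vec6_0, vec6_1, vec6_2, vec6_3, vec6_4, vec6_5, h3, h4, hy] <;> norm_num
      · by_cases h2 : y = -y₀
        · subst h2
          fin_cases i <;> simp [vec6_0, vec6_1, vec6_2, vec6_3, vec6_4, vec6_5, h3, h4, hy] <;> norm_num
        · have h5 : -y ≠ y₀ := by omega
          have h6 : -y ≠ -y₀ := by omega
          fin_cases i <;> simp [vec6_0, vec6_1, vec6_2, vec6_3, vec6_4, vec6_5, h1, h2, h5, h6]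
    have hD : Dop p v₂ = fun y i => Complex.exp (-(2 * p) * Complex.I) * v₂ y i := by
      funext y i
      fin_cases i <;> simp [vec6_0, vec6_1, vec6_2, vec6_3, vec6_4, vec6_5, Dop, v₂, h3, h4]
    have hv0 : (fun i => Complex.exp (-(2 * p) * Complex.I) * v₂ 0 i) = (0 : Fin 6 → ℂ) := by
      funext i
      simp [v₂, hy', hy'']
    have hJ : Jop l (fun y i => Complex.exp (-(2 * p) * Complex.I) * v₂ y i)
        = fun y i => Complex.exp (-(2 * p) * Complex.I) * v₂ y i := by
      funext y i
      simp only [Jop]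
      split
      · next h => subst h; rw [hv0, Matrix.mulVec_zero]; simp [v₂, hy', hy'']
      · rfl
    show Pneg (Jop l (Dop p (Pneg v₂))) = _
    rw [hP, hD, hJ, hPsmul, hP]
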